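/- The Gaussian-form function π(h) = 1 − (1 − p)(1 − exp(−(|h|/a)^2)) with 0 < p < 1, a > 0, violates the transiogram triangle inequality π(2h) ≥ 2π(h) − 1 for all sufficiently small nonzero |h|; hence the Gaussian form is not a valid auto-transiogram of any stationary indicator random field with proportion p. -/
import Mathlib


/-- The Gaussian-form function `π(h) = 1 − (1 − p)(1 − exp(−(|h|/a)^2))` with `0 < p < 1`
and `a > 0` violates the transiogram triangle inequality `π(2h) ≥ 2π(h) − 1` for all
sufficiently small nonzero `|h|`; hence the Gaussian form is not a valid auto-transiogram
of any stationary indicator random field with proportion `p`. -/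
theorem gaussian_form_invalid_transiogram
    {d : ℕ} (p a : ℝ) (hp : 0 < p) (hp1 : p < 1) (ha : 0 < a) :
    ∃ ε > 0, ∀ h : EuclideanSpace ℝ (Fin d), h ≠ 0 → ‖h‖ < ε →
      1 - (1 - p) * (1 - Real.exp (-(‖(2:ℝ) • h‖ / a)^2))
        < 2 * (1 - (1 - p) * (1 - Real.exp (-(‖h‖ / a)^2))) - 1 := by
  refine ⟨a / 2, by positivity, ?_⟩
  intro h hne hlt
  have ht : 0 < ‖h‖ := norm_pos_iff.mpr hne
  have h2 : ‖(2:ℝ) • h‖ = 2 * ‖h‖ := by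
    rw [norm_smul]; norm_num
  set t := ‖h‖ with htdef
  have hta : t / a < 1 / 2 := by
    rw [div_lt_div_iff₀ ha (by norm_num)]; linarith
  have hta0 : 0 < t / a := div_pos ht ha
  have hu : (t / a) ^ 2 < 1 / 4 := by nlinarith
  set x := Real.exp (-(t / a) ^ 2) with hxdef
  have hx1 : x < 1 := Real.exp_lt_one_iff.mpr (by nlinarith)
  have hx34 : 3 / 4 < x := by
    have := Real.add_one_le_exp (-(t / a) ^ 2)
    linarith
  have hq : Real.exp (-(2 * t / a) ^ 2) = x ^ 4 := by
    rw [hxdef, ← Real.exp_nat_mul]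
    norm_num; ring_nf
  rw [h2, hq]
  have hkey : x ^ 3 + x ^ 2 + x - 1 > 0 := by nlinarith
  have hc : 0 < 1 - p := by linarith
  nlinarith [mul_pos hc (mul_pos (sub_pos.mpr hx1) hkey)]
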